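/- Let $q \geq 2$, $z \in \mathbb{C}$, $t = q^{z/2}$, and integer $\alpha \geq 1$. Define $f(t) = \frac{1 - q^{-1/2}t}{1-t^2}(1 + q^{1/2}t)t^{-\alpha} + \frac{1 - q^{-1/2}t^{-1}}{1-t^{-2}}(1 + q^{1/2}t^{-1})t^{\alpha}$. Then $f$ is holomorphic on $\mathbb{C}^\times$, satisfies $f(t) = f(t^{-1})$, and $|f(t)| \leq 4(\alpha+1)(1+q^{1/2}) \max(|t|,|t|^{-1})^{\alpha}$. -/

import Mathlib

open Complex

/-- The regularized expression for the function of Statement 5: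
`f(t) = t^α (1 + t^{-2} + t^{-1}(q^{1/2}-q^{-1/2}) + t^{-2α} g(t)(1-q^{-1/2}t)(1+q^{1/2}t))`
with `g(t) = ∑_{j ≤ α-2} t^{2j}` (empty for `α = 1`). -/
noncomputable def f5 (q : ℝ) (α : ℕ) (t : ℂ) : ℂ :=
  t ^ (α : ℤ) * (1 + t ^ (-2 : ℤ) +
    t ^ (-1 : ℤ) * (((Real.sqrt q : ℝ) : ℂ) - (((Real.sqrt q)⁻¹ : ℝ) : ℂ)) +
    t ^ (-(2 * (α : ℤ))) * (∑ j ∈ Finset.range (α - 1), t ^ (2 * j)) *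
      (1 - (((Real.sqrt q)⁻¹ : ℝ) : ℂ) * t) * (1 + ((Real.sqrt q : ℝ) : ℂ) * t))

lemma alg2 (t T s E y Y S u v : ℂ) (hT : t*T = 1) (hE : s*E = 1) (hY : y*Y = 1)
    (hu : (1 - t^2)*u = 1) (hv : (1 - T^2)*v = 1) (hG : S*(t^2-1) = y^2-1) :
    y*t*(1 + T^2 + T*(s-E) + (Y^2*T^2*S)*(1-E*t)*(1+s*t)) =
    (1-E*t)*u*(1+s*t)*(Y*T) + (1-E*T)*v*(1+s*T)*(y*t) := by
  linear_combination ((-1)*t^2*T*s*E*y*Y^2*S + t^2*T*y*u*v + (-1)*t*T^2*y*u*v + t*T*s*y*Y^2*S + t*T*s*y*u*v + (-1)*t*T*E*y*Y^2*S + (-1)*t*T*E*y*u*v + (-1)*t*s*E*y*Y^2*S + t*s*E*Y*u + t*y*u*v + (-2)*t*y*u + T*s*E*y*v + T*y*Y^2*S + (-1)*T*y*u*v + T*y + s*y*Y^2*S + s*y*u*v + (-1)*s*y*v + s*y + (-1)*s*Y*u + (-1)*E*y*Y^2*S + (-1)*E*y*u*v + E*y*v + (-1)*E*y + E*Y*u)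 * hT + ((-1)*t*y*Y^2*S + t*Y*u + T*y*v) * hE + (t*y*u + (-1)*t*Y*S + (-1)*T*y*u + T*Y*S + (-1)*s*y*u + s*Y*S + E*y*u + (-1)*E*Y*S) * hY + (t*y*v + (-1)*t*y + t*Y*S + (-1)*T*y*v + (-1)*T*y + (-1)*T*Y*S + s*y*v + (-1)*s*y + (-1)*s*Y*S + (-1)*E*y*v + E*y + E*Y*S) * hu + (t^3*y*u + (-1)*t^2*T*y*u + t^2*s*y*u + (-1)*t^2*E*y*u) * hv + (t*Y*u + (-1)*T*Y*u + (-1)*s*Y*u + E*Y*u) * hG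

lemma alg3 (t T s E y w S S2 : ℂ) (hT : t*T = 1) (hE : s*E = 1) (hW : y*w = 1)
    (hR : y^2*S2 = t^2*S) (hG : S*(t^2-1) = y^2-1) :
    w*T*(1 + t^2 + t*(s-E) + (y^2*t^2*S2)*(1-E*T)*(1+s*T)) =
    y*t*(1 + T^2 + T*(s-E) + (w^2*T^2*S)*(1-E*t)*(1+s*t)) := by
  linear_combination (t^2*T*s*E*y*S*w^2 + (-1)*t*T^2*s*E*y^2*S2*w + t*T*s*y^2*S2*w + (-1)*t*T*s*y*S*w^2 + (-1)*t*T*E*y^2*S2*w + t*T*E*y*S*w^2 + t*s*E*y*S*w^2 + t*y^2*S2*w + (-2)*t*S*w + t*w + (-1)*T*s*E*y^2*S2*w + (-1)*T*y*S*w^2 + (-1)*T*y + s*y^2*S2*w + (-1)*s*y*S*w^2 + (-1)*s*y + s*w + (-1)*E*y^2*S2*w + E*y*S*w^2 + E*y + (-1)*E*w) * hT + (t*y*S*w^2 + (-1)*T*y^2*S2*w) * hE + (t*y + t*S*w + T*y + (-1)*T*S*w + s*y + (-1)*s*S*w + (-1)*E*y + E*S*w) * hW + (t*w + (-1)*T*w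 + s*w + (-1)*E*w) * hR + (t*w + T*w + s*w + (-1)*E*w) * hG

/-- For `q ≥ 2` and an integer `α ≥ 1`, the function
`f(t) = (1-q^{-1/2}t)/(1-t²)(1+q^{1/2}t) t^{-α} + (1-q^{-1/2}t^{-1})/(1-t^{-2})(1+q^{1/2}t^{-1}) t^{α}`
is holomorphic on `ℂ^×`, satisfies `f(t) = f(t⁻¹)`, and
`|f(t)| ≤ 4(α+1)(1+q^{1/2}) max(|t|,|t|⁻¹)^α`. -/
theorem stmt_5 (q : ℝ) (hq : 2 ≤ q) (α : ℕ) (hα : 1 ≤ α) :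
    (∀ t : ℂ, t ≠ 0 → DifferentiableAt ℂ (f5 q α) t) ∧
    (∀ t : ℂ, t ≠ 0 → t ^ 2 ≠ 1 →
      f5 q α t = (1 - (((Real.sqrt q)⁻¹ : ℝ) : ℂ) * t) / (1 - t ^ 2) *
          (1 + ((Real.sqrt q : ℝ) : ℂ) * t) * t ^ (-(α : ℤ)) +
        (1 - (((Real.sqrt q)⁻¹ : ℝ) : ℂ) * t⁻¹) / (1 - (t⁻¹) ^ 2) *
          (1 + ((Real.sqrt q : ℝ) : ℂ) * t⁻¹) * t ^ (α : ℤ)) ∧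
    (∀ t : ℂ, t ≠ 0 → f5 q α t⁻¹ = f5 q α t) ∧
    (∀ t : ℂ, t ≠ 0 →
      ‖f5 q α t‖ ≤ 4 * (α + 1) * (1 + Real.sqrt q) * (max ‖t‖ ‖t‖⁻¹) ^ α) := by
  obtain ⟨β, rfl⟩ : ∃ β, α = β + 1 := ⟨α - 1, by omega⟩
  have hq0 : (0:ℝ) < q := by linarith
  have hs1 : (1:ℝ) ≤ Real.sqrt q := Real.one_le_sqrt.mpr (by linarith)
  have hs0 : (0:ℝ) < Real.sqrt q := by linarith
  have hsC : ((Real.sqrt q : ℝ) : ℂ) ≠ 0 := ofReal_ne_zero.mpr (ne_of_gt hs0)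
  have hE : ((Real.sqrt q : ℝ) : ℂ) * (((Real.sqrt q)⁻¹ : ℝ) : ℂ) = 1 := by
    push_cast
    exact mul_inv_cancel₀ hsC
  have hgeom : ∀ t : ℂ, (∑ j ∈ Finset.range β, t ^ (2*j)) * (t^2 - 1) = (t^β)^2 - 1 := by
    intro t
    simp only [pow_mul]
    rw [geom_sum_mul, ← pow_mul, ← pow_mul, mul_comm 2 β]
  -- Part 1 : differentiability
  have part1 : ∀ t : ℂ, t ≠ 0 → DifferentiableAt ℂ (f5 q (β+1)) t := by
    intro t ht
    unfold f5
    have hz : ∀ n : ℤ, DifferentiableAt ℂ (fun t : ℂ => t ^ n) t :=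
      fun n => differentiableAt_zpow.mpr (Or.inl ht)
    have hs : DifferentiableAt ℂ (fun t : ℂ => ∑ j ∈ Finset.range (β+1-1), t ^ (2 * j)) t :=
      DifferentiableAt.fun_sum fun j _ => differentiableAt_pow _
    exact ((hz _).mul ((((differentiableAt_const _).add (hz _)).add ((hz _).mul
      (differentiableAt_const _))).add ((((hz _).mul hs).mul
      (((differentiableAt_const _).sub ((differentiableAt_const _).mul differentiableAt_id)))).mul
      (((differentiableAt_const _).add ((differentiableAt_const _).mul differentiableAt_id))))))
  -- Part 2 : identity with the rational expression
  have part2 : ∀ t : ℂ, t ≠ 0 → t ^ 2 ≠ 1 →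
      f5 q (β+1) t = (1 - (((Real.sqrt q)⁻¹ : ℝ) : ℂ) * t) / (1 - t ^ 2) *
          (1 + ((Real.sqrt q : ℝ) : ℂ) * t) * t ^ (-((β+1 : ℕ) : ℤ)) +
        (1 - (((Real.sqrt q)⁻¹ : ℝ) : ℂ) * t⁻¹) / (1 - (t⁻¹) ^ 2) *
          (1 + ((Real.sqrt q : ℝ) : ℂ) * t⁻¹) * t ^ ((β+1 : ℕ) : ℤ) := by
    intro t ht ht2
    have h1 : (1 : ℂ) - t ^ 2 ≠ 0 := sub_ne_zero.mpr (Ne.symm ht2)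
    have h3 : (1 : ℂ) - (t⁻¹) ^ 2 ≠ 0 := by
      intro h
      apply h1
      have h4 : ((1:ℂ) - (t⁻¹)^2) * t^2 = t^2 - 1 := by
        rw [sub_mul, one_mul, inv_pow, inv_mul_cancel₀ (pow_ne_zero 2 ht)]
      rw [h, zero_mul] at h4
      linear_combination h4
    have hT := mul_inv_cancel₀ ht
    have hY := mul_inv_cancel₀ (pow_ne_zero β ht)
    have hu := mul_inv_cancel₀ h1
    have hv := mul_inv_cancel₀ h3
    have inst := alg2 t t⁻¹ ((Real.sqrt q : ℝ) : ℂ) (((Real.sqrt q)⁻¹ : ℝ) : ℂ)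
      (t^β) (t^β)⁻¹ (∑ j ∈ Finset.range β, t ^ (2*j)) (1 - t^2)⁻¹ ((1 - (t⁻¹)^2))⁻¹
      hT hE hY hu hv (hgeom t)
    unfold f5
    simp only [Nat.add_sub_cancel]
    have e2 : t ^ ((β+1 : ℕ) : ℤ) = t^β * t := by rw [zpow_natCast, pow_succ]
    have e1 : t ^ (-(2 * ((β+1 : ℕ) : ℤ))) = ((t^β)^2 * t^2)⁻¹ := by
      rw [zpow_neg, show (2 * ((β+1 : ℕ) : ℤ)) = ((2*β+2 : ℕ) : ℤ) by push_cast; ring,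
        zpow_natCast]
      congr 1
      rw [show 2*β+2 = β*2+2 by omega, pow_add, pow_mul]
    have e3 : t ^ (-((β+1 : ℕ) : ℤ)) = (t^β * t)⁻¹ := by rw [zpow_neg, e2]
    have e4 : t ^ (-2 : ℤ) = (t^2)⁻¹ := by
      rw [zpow_neg, show ((2:ℤ)) = ((2:ℕ):ℤ) by norm_num, zpow_natCast]
    have e5 : t ^ (-1 : ℤ) = t⁻¹ := zpow_neg_one t
    rw [e1, e2, e3, e4, e5, div_eq_mul_inv, div_eq_mul_inv]
    linear_combination inst
  -- Part 3 : symmetry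
  have part3 : ∀ t : ℂ, t ≠ 0 → f5 q (β+1) t⁻¹ = f5 q (β+1) t := by
    intro t ht
    have hT := mul_inv_cancel₀ ht
    have hW := mul_inv_cancel₀ (pow_ne_zero β ht)
    have hR : (t^β)^2 * (∑ j ∈ Finset.range β, (t⁻¹) ^ (2*j)) =
        t^2 * (∑ j ∈ Finset.range β, t ^ (2*j)) := by
      rw [Finset.mul_sum, Finset.mul_sum,
        ← Finset.sum_range_reflect (fun j => t^2 * t^(2*j)) β]
      refine Finset.sum_congr rfl fun j hj => ?_
      have hj' := Finset.mem_range.mp hj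
      have h1 : (t^β)^2 = t^(2*(β-1-j)+2+2*j) := by rw [← pow_mul]; congr 1; omega
      rw [h1, inv_pow, pow_add, mul_assoc, mul_inv_cancel₀ (pow_ne_zero _ ht), mul_one,
        pow_add, mul_comm]
    have inst := alg3 t t⁻¹ ((Real.sqrt q : ℝ) : ℂ) (((Real.sqrt q)⁻¹ : ℝ) : ℂ)
      (t^β) (t^β)⁻¹ (∑ j ∈ Finset.range β, t ^ (2*j)) (∑ j ∈ Finset.range β, (t⁻¹) ^ (2*j))
      hT hE hW hR (hgeom t)
    unfold f5
    simp only [Nat.add_sub_cancel]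
    -- rewrites for the t side
    have e2 : t ^ ((β+1 : ℕ) : ℤ) = t^β * t := by rw [zpow_natCast, pow_succ]
    have e1 : t ^ (-(2 * ((β+1 : ℕ) : ℤ))) = ((t^β)^2 * t^2)⁻¹ := by
      rw [zpow_neg, show (2 * ((β+1 : ℕ) : ℤ)) = ((2*β+2 : ℕ) : ℤ) by push_cast; ring,
        zpow_natCast]
      congr 1
      rw [show 2*β+2 = β*2+2 by omega, pow_add, pow_mul]
    have e4 : t ^ (-2 : ℤ) = (t^2)⁻¹ := by
      rw [zpow_neg, show ((2:ℤ)) = ((2:ℕ):ℤ) by norm_num, zpow_natCast]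
    have e5 : t ^ (-1 : ℤ) = t⁻¹ := zpow_neg_one t
    -- rewrites for the t⁻¹ side
    have f2 : (t⁻¹) ^ ((β+1 : ℕ) : ℤ) = (t^β)⁻¹ * t⁻¹ := by
      rw [zpow_natCast, pow_succ, inv_pow]
    have f1 : (t⁻¹) ^ (-(2 * ((β+1 : ℕ) : ℤ))) = (t^β)^2 * t^2 := by
      rw [inv_zpow, zpow_neg, inv_inv,
        show (2 * ((β+1 : ℕ) : ℤ)) = ((2*β+2 : ℕ) : ℤ) by push_cast; ring, zpow_natCast]
      rw [show 2*β+2 = β*2+2 by omega, pow_add, pow_mul]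
    have f4 : (t⁻¹) ^ (-2 : ℤ) = t^2 := by
      rw [inv_zpow, zpow_neg, inv_inv, show ((2:ℤ)) = ((2:ℕ):ℤ) by norm_num, zpow_natCast]
    have f5' : (t⁻¹) ^ (-1 : ℤ) = t := by rw [zpow_neg_one, inv_inv]
    rw [e1, e2, e4, e5, f1, f2, f4, f5']
    linear_combination inst
  -- Part 4 : the bound
  have key4 : ∀ t : ℂ, t ≠ 0 → 1 ≤ ‖t‖ →
      ‖f5 q (β+1) t‖ ≤ 4 * ((β+1 : ℕ) + 1) * (1 + Real.sqrt q) * ‖t‖ ^ (β+1) := by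
    intro t ht hr
    have hr0 : (0:ℝ) < ‖t‖ := lt_of_lt_of_le one_pos hr
    have hrn : ‖t‖ ≠ 0 := ne_of_gt hr0
    have hsinv : (Real.sqrt q)⁻¹ ≤ 1 := inv_le_one_of_one_le₀ hs1
    have hsinv0 : (0:ℝ) < (Real.sqrt q)⁻¹ := inv_pos.mpr hs0
    have nE : ‖(((Real.sqrt q)⁻¹ : ℝ) : ℂ)‖ = (Real.sqrt q)⁻¹ := by
      rw [Complex.norm_real]
      exact abs_of_pos hsinv0
    have nS : ‖((Real.sqrt q : ℝ) : ℂ)‖ = Real.sqrt q := by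
      rw [Complex.norm_real]
      exact abs_of_pos hs0
    have hdiff : ‖((Real.sqrt q : ℝ) : ℂ) - (((Real.sqrt q)⁻¹ : ℝ) : ℂ)‖ ≤ Real.sqrt q := by
      rw [← Complex.ofReal_sub, Complex.norm_real, Real.norm_eq_abs,
        _root_.abs_of_nonneg (show (0:ℝ) ≤ Real.sqrt q - (Real.sqrt q)⁻¹ by linarith)]
      linarith
    have hsum : ‖t ^ (-(2 * ((β+1 : ℕ) : ℤ))) * (∑ j ∈ Finset.range β, t ^ (2*j))‖ ≤
        β * (‖t‖^4)⁻¹ := by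
      rw [Finset.mul_sum]
      calc ‖∑ j ∈ Finset.range β, t ^ (-(2 * ((β+1 : ℕ) : ℤ))) * t ^ (2*j)‖
          ≤ ∑ j ∈ Finset.range β, ‖t ^ (-(2 * ((β+1 : ℕ) : ℤ))) * t ^ (2*j)‖ :=
            norm_sum_le _ _
        _ ≤ ∑ _j ∈ Finset.range β, (‖t‖^4)⁻¹ := by
            refine Finset.sum_le_sum fun j hj => ?_
            have hj' := Finset.mem_range.mp hj
            rw [← zpow_natCast t (2*j), ← zpow_add₀ ht, norm_zpow]
            have h4 : ‖t‖ ^ (-4 : ℤ) = (‖t‖^4)⁻¹ := by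
              rw [zpow_neg, show ((4:ℤ)) = ((4:ℕ):ℤ) by norm_num, zpow_natCast]
            rw [← h4]
            refine zpow_le_zpow_right₀ hr ?_
            omega
        _ = β * (‖t‖^4)⁻¹ := by
            rw [Finset.sum_const, Finset.card_range, nsmul_eq_mul]
    have h1E : ‖(1 : ℂ) - (((Real.sqrt q)⁻¹ : ℝ) : ℂ) * t‖ ≤ 2 * ‖t‖ := by
      calc ‖(1 : ℂ) - (((Real.sqrt q)⁻¹ : ℝ) : ℂ) * t‖
          ≤ ‖(1:ℂ)‖ + ‖(((Real.sqrt q)⁻¹ : ℝ) : ℂ) * t‖ := norm_sub_le _ _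
        _ = 1 + (Real.sqrt q)⁻¹ * ‖t‖ := by rw [norm_one, norm_mul, nE]
        _ ≤ 2 * ‖t‖ := by nlinarith
    have h1S : ‖(1 : ℂ) + ((Real.sqrt q : ℝ) : ℂ) * t‖ ≤ (1 + Real.sqrt q) * ‖t‖ := by
      calc ‖(1 : ℂ) + ((Real.sqrt q : ℝ) : ℂ) * t‖
          ≤ ‖(1:ℂ)‖ + ‖((Real.sqrt q : ℝ) : ℂ) * t‖ := norm_add_le _ _
        _ = 1 + Real.sqrt q * ‖t‖ := by rw [norm_one, norm_mul, nS]
        _ ≤ (1 + Real.sqrt q) * ‖t‖ := by nlinarith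
    have hA : ‖t ^ (-2 : ℤ)‖ ≤ 1 := by
      rw [norm_zpow]
      calc ‖t‖ ^ (-2 : ℤ) ≤ ‖t‖ ^ (0 : ℤ) := zpow_le_zpow_right₀ hr (by norm_num)
        _ = 1 := zpow_zero _
    have hB : ‖t ^ (-1 : ℤ)‖ ≤ 1 := by
      rw [norm_zpow]
      calc ‖t‖ ^ (-1 : ℤ) ≤ ‖t‖ ^ (0 : ℤ) := zpow_le_zpow_right₀ hr (by norm_num)
        _ = 1 := zpow_zero _
    have hr4 : (‖t‖^4)⁻¹ * (2*‖t‖) * ((1 + Real.sqrt q)*‖t‖) ≤ 2 * (1 + Real.sqrt q) := by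
      have hpos : (0:ℝ) < ‖t‖^4 := by positivity
      have h42 : ‖t‖^2 ≤ ‖t‖^4 := pow_le_pow_right₀ hr (by norm_num)
      have hx : ‖t‖^2 * (‖t‖^4)⁻¹ ≤ 1 := by
        rw [← div_eq_mul_inv, div_le_one hpos]
        exact h42
      nlinarith [mul_le_mul_of_nonneg_left hx (show (0:ℝ) ≤ 2*(1 + Real.sqrt q) by linarith)]
    have n3 : ‖t ^ (-1 : ℤ) * (((Real.sqrt q : ℝ) : ℂ) - (((Real.sqrt q)⁻¹ : ℝ) : ℂ))‖ ≤
        Real.sqrt q := by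
      calc ‖t ^ (-1 : ℤ) * (((Real.sqrt q : ℝ) : ℂ) - (((Real.sqrt q)⁻¹ : ℝ) : ℂ))‖
          = ‖t ^ (-1 : ℤ)‖ * ‖((Real.sqrt q : ℝ) : ℂ) - (((Real.sqrt q)⁻¹ : ℝ) : ℂ)‖ :=
            norm_mul _ _
        _ ≤ 1 * Real.sqrt q := mul_le_mul hB hdiff (norm_nonneg _) (by norm_num)
        _ = Real.sqrt q := one_mul _
    have n4 : ‖t ^ (-(2 * ((β+1 : ℕ) : ℤ))) * (∑ j ∈ Finset.range β, t ^ (2*j)) *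
        (1 - (((Real.sqrt q)⁻¹ : ℝ) : ℂ) * t) * (1 + ((Real.sqrt q : ℝ) : ℂ) * t)‖ ≤
        β * (2 * (1 + Real.sqrt q)) := by
      rw [norm_mul, norm_mul]
      calc ‖t ^ (-(2 * ((β+1 : ℕ) : ℤ))) * (∑ j ∈ Finset.range β, t ^ (2*j))‖ *
          ‖(1 : ℂ) - (((Real.sqrt q)⁻¹ : ℝ) : ℂ) * t‖ *
          ‖(1 : ℂ) + ((Real.sqrt q : ℝ) : ℂ) * t‖
          ≤ (β * (‖t‖^4)⁻¹) * (2*‖t‖) * ((1 + Real.sqrt q)*‖t‖) :=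
            mul_le_mul (mul_le_mul hsum h1E (norm_nonneg _) (by positivity)) h1S
              (norm_nonneg _) (by positivity)
        _ = β * ((‖t‖^4)⁻¹ * (2*‖t‖) * ((1 + Real.sqrt q)*‖t‖)) := by ring
        _ ≤ β * (2 * (1 + Real.sqrt q)) := mul_le_mul_of_nonneg_left hr4 (Nat.cast_nonneg β)
    have hX : ‖(1 : ℂ) + t ^ (-2 : ℤ) +
        t ^ (-1 : ℤ) * (((Real.sqrt q : ℝ) : ℂ) - (((Real.sqrt q)⁻¹ : ℝ) : ℂ)) +
        t ^ (-(2 * ((β+1 : ℕ) : ℤ))) * (∑ j ∈ Finset.range β, t ^ (2*j)) *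
          (1 - (((Real.sqrt q)⁻¹ : ℝ) : ℂ) * t) * (1 + ((Real.sqrt q : ℝ) : ℂ) * t)‖ ≤
        4 * ((β+1 : ℕ) + 1) * (1 + Real.sqrt q) := by
      calc ‖(1 : ℂ) + t ^ (-2 : ℤ) +
          t ^ (-1 : ℤ) * (((Real.sqrt q : ℝ) : ℂ) - (((Real.sqrt q)⁻¹ : ℝ) : ℂ)) +
          t ^ (-(2 * ((β+1 : ℕ) : ℤ))) * (∑ j ∈ Finset.range β, t ^ (2*j)) *
            (1 - (((Real.sqrt q)⁻¹ : ℝ) : ℂ) * t) * (1 + ((Real.sqrt q : ℝ) : ℂ) * t)‖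
          ≤ ‖(1 : ℂ) + t ^ (-2 : ℤ) +
            t ^ (-1 : ℤ) * (((Real.sqrt q : ℝ) : ℂ) - (((Real.sqrt q)⁻¹ : ℝ) : ℂ))‖ +
            ‖t ^ (-(2 * ((β+1 : ℕ) : ℤ))) * (∑ j ∈ Finset.range β, t ^ (2*j)) *
            (1 - (((Real.sqrt q)⁻¹ : ℝ) : ℂ) * t) * (1 + ((Real.sqrt q : ℝ) : ℂ) * t)‖ :=
            norm_add_le _ _
        _ ≤ (‖(1 : ℂ) + t ^ (-2 : ℤ)‖ +
            ‖t ^ (-1 : ℤ) * (((Real.sqrt q : ℝ) : ℂ) - (((Real.sqrt q)⁻¹ : ℝ) : ℂ))‖) +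
            ‖t ^ (-(2 * ((β+1 : ℕ) : ℤ))) * (∑ j ∈ Finset.range β, t ^ (2*j)) *
            (1 - (((Real.sqrt q)⁻¹ : ℝ) : ℂ) * t) * (1 + ((Real.sqrt q : ℝ) : ℂ) * t)‖ :=
            add_le_add_left (norm_add_le _ _) _
        _ ≤ ((‖(1 : ℂ)‖ + ‖t ^ (-2 : ℤ)‖) + Real.sqrt q) + β * (2 * (1 + Real.sqrt q)) :=
            add_le_add (add_le_add (norm_add_le _ _) n3) n4
        _ ≤ ((1 + 1) + Real.sqrt q) + β * (2 * (1 + Real.sqrt q)) := by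
            rw [norm_one]
            gcongr
        _ ≤ 4 * ((β+1 : ℕ) + 1) * (1 + Real.sqrt q) := by
            push_cast
            nlinarith [Nat.cast_nonneg (α := ℝ) β, hs1,
              mul_nonneg (Nat.cast_nonneg (α := ℝ) β)
                (show (0:ℝ) ≤ 1 + Real.sqrt q by linarith)]
    unfold f5
    simp only [Nat.add_sub_cancel]
    rw [norm_mul, show t ^ ((β+1 : ℕ) : ℤ) = t^(β+1) by rw [zpow_natCast], norm_pow]
    calc ‖t‖^(β+1) * ‖(1 : ℂ) + t ^ (-2 : ℤ) +
        t ^ (-1 : ℤ) * (((Real.sqrt q : ℝ) : ℂ) - (((Real.sqrt q)⁻¹ : ℝ) : ℂ)) +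
        t ^ (-(2 * ((β+1 : ℕ) : ℤ))) * (∑ j ∈ Finset.range β, t ^ (2*j)) *
          (1 - (((Real.sqrt q)⁻¹ : ℝ) : ℂ) * t) * (1 + ((Real.sqrt q : ℝ) : ℂ) * t)‖
        ≤ ‖t‖^(β+1) * (4 * ((β+1 : ℕ) + 1) * (1 + Real.sqrt q)) :=
          mul_le_mul_of_nonneg_left hX (by positivity)
      _ = 4 * ((β+1 : ℕ) + 1) * (1 + Real.sqrt q) * ‖t‖ ^ (β+1) := by ring
  refine ⟨part1, part2, part3, ?_⟩
  intro t ht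
  rcases le_total 1 ‖t‖ with h | h
  · have hmax : max ‖t‖ ‖t‖⁻¹ = ‖t‖ := max_eq_left ((inv_le_one_of_one_le₀ h).trans h)
    rw [hmax]
    exact key4 t ht h
  · have ht0 : (0:ℝ) < ‖t‖ := norm_pos_iff.mpr ht
    have hinv' : 1 ≤ ‖t‖⁻¹ := (one_le_inv₀ ht0).mpr h
    have hinv : 1 ≤ ‖t⁻¹‖ := by rw [norm_inv]; exact hinv'
    have hmax : max ‖t‖ ‖t‖⁻¹ = ‖t‖⁻¹ := max_eq_right (h.trans hinv')
    rw [hmax, ← part3 t ht]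
    have := key4 t⁻¹ (inv_ne_zero ht) hinv
    rwa [norm_inv] at this
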